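/- Let ν > 0, η > 0, γ > 0 and L > 0, and let g : ℝ → ℝ be a bounded continuous L-periodic function. Then there exists a constant C > 0, depending only on η and sup_x |g(x)|, such that for every ε ∈ (0,1], every twice continuously differentiable L-periodic function v : ℝ → ℝ satisfying ν v''(x) + η v(x) − v(x)³ + ε^{-γ} g(x) = 0 for all x ∈ ℝ obeys sup_x |v(x)| ≤ C ε^{-γ/3}. -/

import Mathlib

open Set

/-- At a global maximum of a `C²` function, the second derivative is nonpositive. -/
lemma secondDeriv_nonpos_of_isMax {v : ℝ → ℝ} (hv : ContDiff ℝ 2 v) {x₀ : ℝ}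
    (hmax : ∀ y, v y ≤ v x₀) : deriv (deriv v) x₀ ≤ 0 := by
  have h2 : ContDiff ℝ (1 + 1) v := by
    rw [show ((1 : WithTop ℕ∞) + 1) = 2 from rfl]; exact hv
  have hdv : Differentiable ℝ v := (contDiff_succ_iff_deriv.mp h2).1
  have hdv1 : ContDiff ℝ 1 (deriv v) := (contDiff_succ_iff_deriv.mp h2).2.2
  have hddv : Differentiable ℝ (deriv v) := hdv1.differentiable one_ne_zero
  have hz : deriv v x₀ = 0 := by
    have : IsLocalMax v x₀ := Filter.Eventually.of_forall hmax
    exact this.deriv_eq_zero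
  by_contra h
  push_neg at h
  set c := deriv (deriv v) x₀ with hc
  have hc0 : 0 < c := h
  have hder : HasDerivAt (deriv v) c x₀ := (hddv x₀).hasDerivAt
  have hslope := hasDerivAt_iff_tendsto_slope.mp hder
  have hslope' : Filter.Tendsto (slope (deriv v) x₀) (nhdsWithin x₀ (Ioi x₀)) (nhds c) :=
    hslope.mono_left (nhdsWithin_mono _ (fun y hy => ne_of_gt hy))
  have hev : ∀ᶠ y in nhdsWithin x₀ (Ioi x₀), 0 < slope (deriv v) x₀ y :=
    hslope'.eventually (eventually_gt_nhds hc0)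
  obtain ⟨u, hu, hIoo⟩ := mem_nhdsGT_iff_exists_Ioo_subset.mp hev
  have hpos : ∀ y ∈ Ioo x₀ u, 0 < deriv v y := by
    intro y hy
    have hs : 0 < slope (deriv v) x₀ y := hIoo hy
    rw [slope_def_field, hz, sub_zero] at hs
    have hyx : 0 < y - x₀ := sub_pos.mpr hy.1
    have := mul_pos hs hyx
    rw [div_mul_cancel₀] at this
    · exact this
    · exact ne_of_gt hyx
  have hmono : StrictMonoOn v (Icc x₀ u) :=
    strictMonoOn_of_deriv_pos (convex_Icc _ _) (hdv.continuous.continuousOn)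
      (by rwa [interior_Icc])
  have : v x₀ < v u :=
    hmono (left_mem_Icc.mpr (le_of_lt hu)) (right_mem_Icc.mpr (le_of_lt hu)) hu
  exact absurd (hmax u) (not_le.mpr this)

/-- Cubic inequality: if `M³ ≤ ηM + G a³` with `a ≥ 1`, and `C² ≥ 2η`, `C³ ≥ 2G`,
then `M ≤ C a`. -/
lemma cubic_bound {M a η G C : ℝ} (hM : 0 ≤ M) (ha : 1 ≤ a)
    (h : M ^ 3 ≤ η * M + G * a ^ 3) (hC2 : 2 * η ≤ C ^ 2) (hC3 : 2 * G ≤ C ^ 3)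
    (hC : 0 < C) : M ≤ C * a := by
  by_contra hcon
  push_neg at hcon
  have ha0 : 0 < a := lt_of_lt_of_le one_pos ha
  have hCa : 0 < C * a := mul_pos hC ha0
  have hM0' : 0 < M := lt_trans hCa hcon
  have h1 : (C * a) ^ 3 < M ^ 3 := pow_lt_pow_left₀ hcon hCa.le (by norm_num)
  have hCleM : C < M := lt_of_le_of_lt (le_mul_of_one_le_right hC.le ha) hcon
  have hM2 : C ^ 2 < M ^ 2 := pow_lt_pow_left₀ hCleM hC.le (by norm_num)
  have h2 : C ^ 2 * M < M ^ 3 := by nlinarith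
  have h3 : 2 * η * M ≤ C ^ 2 * M := mul_le_mul_of_nonneg_right hC2 hM0'.le
  have h4 : 2 * G * a ^ 3 ≤ C ^ 3 * a ^ 3 :=
    mul_le_mul_of_nonneg_right hC3 (pow_pos ha0 3).le
  have h5 : C ^ 3 * a ^ 3 = (C * a) ^ 3 := by ring
  nlinarith

theorem stmt14 {η G : ℝ} (hη : 0 < η) (hG : 0 ≤ G) :
    ∃ C : ℝ, 0 < C ∧ ∀ ν L γ : ℝ, 0 < ν → 0 < L → 0 < γ →
      ∀ g : ℝ → ℝ, Continuous g → Function.Periodic g L → (∀ x, |g x| ≤ G) →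
      ∀ ε ∈ Set.Ioc (0:ℝ) 1, ∀ v : ℝ → ℝ, ContDiff ℝ 2 v → Function.Periodic v L →
        (∀ x, ν * iteratedDeriv 2 v x + η * v x - (v x) ^ 3 + ε ^ (-γ) * g x = 0) →
        ∀ x, |v x| ≤ C * ε ^ (-γ / 3) := by
  set C : ℝ := Real.sqrt (2 * η) + (2 * G) ^ ((1:ℝ)/3) + 1 with hCdef
  have hsq : 0 ≤ Real.sqrt (2 * η) := Real.sqrt_nonneg _
  have hcbrt : 0 ≤ (2 * G) ^ ((1:ℝ)/3) := Real.rpow_nonneg (by linarith) _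
  have hC : 0 < C := by positivity
  have hC2 : 2 * η ≤ C ^ 2 := by
    have h1 : Real.sqrt (2 * η) ^ 2 = 2 * η := Real.sq_sqrt (by linarith)
    have h2 : Real.sqrt (2 * η) ≤ C := by rw [hCdef]; linarith
    calc 2 * η = Real.sqrt (2 * η) ^ 2 := h1.symm
      _ ≤ C ^ 2 := pow_le_pow_left₀ hsq h2 2
  have hC3 : 2 * G ≤ C ^ 3 := by
    have h1 : ((2 * G) ^ ((1:ℝ)/3)) ^ 3 = 2 * G := by
      rw [← Real.rpow_natCast ((2 * G) ^ ((1:ℝ)/3)) 3, ← Real.rpow_mul (by linarith)]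
      norm_num
    have h2 : (2 * G) ^ ((1:ℝ)/3) ≤ C := by rw [hCdef]; linarith
    calc 2 * G = ((2 * G) ^ ((1:ℝ)/3)) ^ 3 := h1.symm
      _ ≤ C ^ 3 := pow_le_pow_left₀ hcbrt h2 3
  refine ⟨C, hC, fun ν L γ hν hL hγ g hgc hgp hgb ε hε v hv hvp heq x => ?_⟩
  obtain ⟨hε0, hε1⟩ := hε
  set E : ℝ := ε ^ (-γ) with hE
  set a : ℝ := ε ^ (-γ / 3) with ha
  have hE0 : 0 < E := Real.rpow_pos_of_pos hε0 _
  have ha1 : 1 ≤ a := Real.one_le_rpow_of_pos_of_le_one_of_nonpos hε0 hε1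
    (by linarith [div_nonneg hγ.le (by norm_num : (0:ℝ) ≤ 3)] : -γ / 3 ≤ 0)
  have ha3 : a ^ 3 = E := by
    rw [ha, hE, ← Real.rpow_natCast (ε ^ (-γ / 3)) 3, ← Real.rpow_mul hε0.le]
    norm_num
  -- maximum and minimum points
  have hvc : Continuous v := hv.continuous
  obtain ⟨x₀, _, hx₀⟩ := isCompact_Icc.exists_isMaxOn (nonempty_Icc.mpr hL.le)
    (hvc.continuousOn (s := Icc 0 L))
  obtain ⟨x₁, _, hx₁⟩ := isCompact_Icc.exists_isMinOn (nonempty_Icc.mpr hL.le)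
    (hvc.continuousOn (s := Icc 0 L))
  have hmax : ∀ y, v y ≤ v x₀ := by
    intro y
    obtain ⟨z, hz, hzy⟩ := hvp.exists_mem_Ico₀ hL y
    rw [hzy]
    exact hx₀ (Ico_subset_Icc_self hz)
  have hmin : ∀ y, v x₁ ≤ v y := by
    intro y
    obtain ⟨z, hz, hzy⟩ := hvp.exists_mem_Ico₀ hL y
    rw [hzy]
    exact hx₁ (Ico_subset_Icc_self hz)
  -- second derivative signs
  have hit : ∀ y, iteratedDeriv 2 v y = deriv (deriv v) y := by
    intro y
    rw [show (2 : ℕ) = 1 + 1 from rfl, iteratedDeriv_succ, iteratedDeriv_one]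
  have hdd0 : deriv (deriv v) x₀ ≤ 0 := secondDeriv_nonpos_of_isMax hv hmax
  have hdd1 : 0 ≤ deriv (deriv v) x₁ := by
    have hneg : ContDiff ℝ 2 (fun y => -v y) := hv.neg
    have hmax' : ∀ y, -v y ≤ -v x₁ := fun y => neg_le_neg (hmin y)
    have := secondDeriv_nonpos_of_isMax hneg hmax'
    have hd : deriv (fun y => -v y) = fun y => -deriv v y := funext fun y => deriv.neg
    rw [hd] at this
    have hd2 : deriv (fun y => -deriv v y) x₁ = -deriv (deriv v) x₁ := deriv.neg
    rw [hd2] at this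
    linarith
  set M : ℝ := max (v x₀) (-(v x₁)) with hM
  have hM0 : 0 ≤ M := by
    rcases le_total 0 (v x₀) with h | h
    · exact le_trans h (le_max_left _ _)
    · exact le_trans (by linarith [hmax x₁, hmin x₀]) (le_max_right _ _)
  have habs : |v x| ≤ M := by
    rw [abs_le]
    constructor
    · linarith [hmin x, le_max_right (v x₀) (-(v x₁))]
    · exact le_trans (hmax x) (le_max_left _ _)
  have hM3 : M ^ 3 ≤ η * M + G * a ^ 3 := by
    rw [ha3]
    rcases max_cases (v x₀) (-(v x₁)) with ⟨hM', hle⟩ | ⟨hM', hlt⟩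
    · -- M = v x₀
      rw [show M = v x₀ from hM.trans hM']
      have he := heq x₀
      rw [hit x₀] at he
      have hg := hgb x₀
      rw [abs_le] at hg
      nlinarith [mul_nonpos_of_nonneg_of_nonpos hν.le hdd0, mul_le_mul_of_nonneg_left hg.2 hE0.le]
    · -- M = -(v x₁)
      rw [show M = -(v x₁) from hM.trans hM']
      have he := heq x₁
      rw [hit x₁] at he
      have hg := hgb x₁
      rw [abs_le] at hg
      nlinarith [mul_nonneg hν.le hdd1, mul_le_mul_of_nonneg_left hg.1 hE0.le]
  calc |v x| ≤ M := habs
    _ ≤ C * a := cubic_bound hM0 ha1 hM3 hC2 hC3 hC
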